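/- For every Lindblad generator ℒ on M₂(ℂ), the kernel of ℒ, viewed as a ℂ-linear subspace of M₂(ℂ), does not have complex dimension exactly 3. Equivalently, if a single-qubit Lindblad generator annihilates three linearly independent matrices, then it is identically zero. -/

import Mathlib

open Matrix Complex

noncomputable section

/-- Pauli matrices. -/
def σx : Matrix (Fin 2) (Fin 2) ℂ := !![0, 1; 1, 0]
def σy : Matrix (Fin 2) (Fin 2) ℂ := !![0, -Complex.I; Complex.I, 0]
def σz : Matrix (Fin 2) (Fin 2) ℂ := !![1, 0; 0, -1]

/-- Operators on `r` qubits: the `r`-fold tensor power of `M₂(ℂ)`. -/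
abbrev QOp (r : ℕ) := Matrix (Fin r → Fin 2) (Fin r → Fin 2) ℂ

/-- Operators on a ring of `n` qubits. -/
abbrev ROp (n : ℕ) := Matrix (ZMod n → Fin 2) (ZMod n → Fin 2) ℂ

/-- The Lindblad dissipator `D_L(ρ) = [Lρ, L†] + [L, ρL†]`. -/
def dissipator {I : Type*} [Fintype I] (L ρ : Matrix I I ℂ) : Matrix I I ℂ :=
  (L * ρ * Lᴴ - Lᴴ * (L * ρ)) + (L * (ρ * Lᴴ) - ρ * Lᴴ * L)

/-- `𝓛` is a Lindblad generator: `𝓛(ρ) = i(ρH − Hρ) + Σ_k D_{L_k}(ρ)` for a Hermitian `H`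
and a finite family of Lindblad operators. -/
def IsLindblad {I : Type*} [Fintype I] (𝓛 : Matrix I I ℂ → Matrix I I ℂ) : Prop :=
  ∃ H : Matrix I I ℂ, H.IsHermitian ∧ ∃ (m : ℕ) (Ls : Fin m → Matrix I I ℂ),
    ∀ ρ, 𝓛 ρ = Complex.I • (ρ * H - H * ρ) + ∑ k, dissipator (Ls k) ρ

/-- Tensor (Kronecker) product of two single-qubit operators, as a two-qubit operator. -/
def kron2 (A B : Matrix (Fin 2) (Fin 2) ℂ) : QOp 2 :=
  Matrix.of fun x y => A (x 0) (y 0) * B (x 1) (y 1)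

/-- Tensor product of `m` single-qubit operators. -/
def kronPow {m : ℕ} (f : Fin m → Matrix (Fin 2) (Fin 2) ℂ) : QOp m :=
  Matrix.of fun x y => ∏ i, f i (x i) (y i)

variable {n : ℕ}

/-- `b` acting on the `r` consecutive sites `j, j+1, …, j+r−1` (mod `n`) of the ring,
and as identity on all other sites. -/
def embWin [NeZero n] (r : ℕ) (j : ZMod n) (b : QOp r) : ROp n :=
  Matrix.of fun x y =>
    (∏ s : ZMod n, if ∃ i : Fin r, s = j + (i.val : ZMod n) then (1 : ℂ)
      else if x s = y s then 1 else 0) *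
    b (fun i => x (j + (i.val : ZMod n))) (fun i => y (j + (i.val : ZMod n)))

/-- Replace the values of a ring configuration on the window `j,…,j+r−1` by `u`. -/
def patch (r : ℕ) (j : ZMod n) (x : ZMod n → Fin 2) (u : Fin r → Fin 2) : ZMod n → Fin 2 :=
  fun s => if h : ∃ i : Fin r, s = j + (i.val : ZMod n) then u h.choose else x s

/-- The (linear) map `𝓛` on `r`-site operators, acting as `𝓛` on the tensor factors of the
sites `j,…,j+r−1` of the ring and as the identity map on all other tensor factors. -/
def embMap [NeZero n] (r : ℕ) (j : ZMod n) (𝓛 : QOp r → QOp r) (M : ROp n) : ROp n :=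
  Matrix.of fun x y =>
    (∏ s : ZMod n, if ∃ i : Fin r, s = j + (i.val : ZMod n) then (1 : ℂ)
      else if x s = y s then 1 else 0) *
    𝓛 (Matrix.of fun u u' => M (patch r j x u) (patch r j y u'))
      (fun i => x (j + (i.val : ZMod n))) (fun i => y (j + (i.val : ZMod n)))

/-- A single-qubit operator `b` acting on site `k` of the ring, identity elsewhere. -/
def embSite [NeZero n] (k : ZMod n) (b : Matrix (Fin 2) (Fin 2) ℂ) : ROp n :=
  Matrix.of fun x y =>
    (∏ s : ZMod n, if s = k then (1 : ℂ) else if x s = y s then 1 else 0) * b (x k) (y k)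

/-- A (linear) map `𝓛` on single-qubit operators acting on site `j` of the ring,
identity map on all other tensor factors. -/
def embMapSite [NeZero n] (j : ZMod n)
    (𝓛 : Matrix (Fin 2) (Fin 2) ℂ → Matrix (Fin 2) (Fin 2) ℂ) (M : ROp n) : ROp n :=
  Matrix.of fun x y =>
    (∏ s : ZMod n, if s = j then (1 : ℂ) else if x s = y s then 1 else 0) *
    𝓛 (Matrix.of fun u u' => M (Function.update x j u) (Function.update y j u')) (x j) (y j)


section Stmt11Helpers

private lemma dstar (a b : Fin 2 → ℂ) : star a ⬝ᵥ b = starRingEnd ℂ (star b ⬝ᵥ a) := by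
  simp [dotProduct, Fin.sum_univ_two, mul_comm]

private lemma vmv (v w x : Fin 2 → ℂ) :
    (Matrix.vecMulVec v (star w)) *ᵥ x = (star w ⬝ᵥ x) • v := by
  funext i
  simp [Matrix.vecMulVec, Matrix.mulVec, dotProduct, Fin.sum_univ_two]
  ring

private lemma conjrel (L : Matrix (Fin 2) (Fin 2) ℂ) (χ ψ : Fin 2 → ℂ) :
    star χ ⬝ᵥ (Lᴴ *ᵥ ψ) = starRingEnd ℂ (star ψ ⬝ᵥ (L *ᵥ χ)) := by
  simp [dotProduct, Matrix.mulVec, Matrix.conjTranspose_apply, Fin.sum_univ_two]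
  ring

private lemma q_comm (H : Matrix (Fin 2) (Fin 2) ℂ) (χ ψ : Fin 2 → ℂ)
    (ho : star ψ ⬝ᵥ χ = 0) (ho2 : star χ ⬝ᵥ ψ = 0) :
    star ψ ⬝ᵥ ((Matrix.vecMulVec χ (star χ) * H - H * Matrix.vecMulVec χ (star χ)) *ᵥ ψ) = 0 := by
  simp only [Matrix.sub_mulVec, dotProduct_sub, ← Matrix.mulVec_mulVec, vmv,
    dotProduct_smul, Matrix.mulVec_smul, ho, ho2, zero_smul, Matrix.mulVec_zero,
    dotProduct_zero, smul_eq_mul, mul_zero, sub_zero]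

private lemma q_diss (L : Matrix (Fin 2) (Fin 2) ℂ) (χ ψ : Fin 2 → ℂ)
    (ho : star ψ ⬝ᵥ χ = 0) (ho2 : star χ ⬝ᵥ ψ = 0) :
    star ψ ⬝ᵥ ((dissipator L (Matrix.vecMulVec χ (star χ))) *ᵥ ψ) =
      2 * (starRingEnd ℂ (star ψ ⬝ᵥ (L *ᵥ χ)) * (star ψ ⬝ᵥ (L *ᵥ χ))) := by
  unfold dissipator
  simp only [Matrix.add_mulVec, Matrix.sub_mulVec, dotProduct_add, dotProduct_sub,
    ← Matrix.mulVec_mulVec, vmv, Matrix.mulVec_smul, dotProduct_smul, ho, ho2,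
    zero_smul, Matrix.mulVec_zero, dotProduct_zero, smul_eq_mul, mul_zero, conjrel]
  ring

private lemma sum_mulVec' {m : ℕ} (A : Fin m → Matrix (Fin 2) (Fin 2) ℂ) (v : Fin 2 → ℂ) :
    (∑ k, A k) *ᵥ v = ∑ k, (A k *ᵥ v) := by
  funext i
  simp [Matrix.mulVec, dotProduct, Matrix.sum_apply, Finset.sum_mul]
  fin_cases i <;> simp [Finset.sum_add_distrib]

private lemma dot_sum' {m : ℕ} (w : Fin m → (Fin 2 → ℂ)) (v : Fin 2 → ℂ) :
    v ⬝ᵥ (∑ k, w k) = ∑ k, v ⬝ᵥ w k := by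
  simp [dotProduct, Finset.sum_apply, Finset.mul_sum]
  exact Finset.sum_add_distrib.symm

private lemma key_id (H : Matrix (Fin 2) (Fin 2) ℂ) {m : ℕ}
    (Ls : Fin m → Matrix (Fin 2) (Fin 2) ℂ)
    (χ ψ : Fin 2 → ℂ) (ho : star ψ ⬝ᵥ χ = 0) :
    star ψ ⬝ᵥ ((Complex.I • (Matrix.vecMulVec χ (star χ) * H - H * Matrix.vecMulVec χ (star χ)) +
      ∑ k, dissipator (Ls k) (Matrix.vecMulVec χ (star χ))) *ᵥ ψ) =
    ∑ k, 2 * (starRingEnd ℂ (star ψ ⬝ᵥ (Ls k *ᵥ χ)) * (star ψ ⬝ᵥ (Ls k *ᵥ χ))) := by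
  have ho2 : star χ ⬝ᵥ ψ = 0 := by rw [dstar, ho, map_zero]
  rw [Matrix.add_mulVec, dotProduct_add, Matrix.smul_mulVec,
    dotProduct_smul, q_comm H χ ψ ho ho2, smul_zero, zero_add, sum_mulVec', dot_sum']
  exact Finset.sum_congr rfl fun k _ => q_diss (Ls k) χ ψ ho ho2

private lemma trace_diss (L ρ : Matrix (Fin 2) (Fin 2) ℂ) : (dissipator L ρ).trace = 0 := by
  unfold dissipator
  rw [Matrix.trace_add, Matrix.trace_sub, Matrix.trace_sub,
    Matrix.trace_mul_comm (L * ρ) Lᴴ, Matrix.trace_mul_comm L (ρ * Lᴴ), ← mul_assoc]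
  ring

private lemma diss_herm (L ρ : Matrix (Fin 2) (Fin 2) ℂ) :
    dissipator L ρᴴ = (dissipator L ρ)ᴴ := by
  unfold dissipator
  simp only [Matrix.conjTranspose_add, Matrix.conjTranspose_sub, Matrix.conjTranspose_mul,
    Matrix.conjTranspose_conjTranspose, mul_assoc]
  abel

private lemma diss_scalar (a : ℂ) (ρ : Matrix (Fin 2) (Fin 2) ℂ) :
    dissipator (a • 1) ρ = 0 := by
  unfold dissipator
  simp [Matrix.conjTranspose_smul, Matrix.smul_mul, Matrix.mul_smul, smul_smul, mul_comm]

private lemma pair_orth (e f : Fin 2 → ℂ) (ω : ℂ) (hω : starRingEnd ℂ ω * ω = 1)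
    (hef : star e ⬝ᵥ f = 0) (hfe : star f ⬝ᵥ e = 0)
    (hnorm : star e ⬝ᵥ e = star f ⬝ᵥ f) :
    star (e - ω • f) ⬝ᵥ (e + ω • f) = 0 := by
  simp only [star_sub, star_smul, sub_dotProduct, smul_dotProduct,
    dotProduct_add, dotProduct_smul, hef, hfe, smul_eq_mul, mul_zero,
    add_zero, zero_add, Complex.star_def]
  linear_combination hnorm - (star f ⬝ᵥ f) * hω

private lemma pair_expand (L : Matrix (Fin 2) (Fin 2) ℂ) (e f : Fin 2 → ℂ) (ω : ℂ) :
    star (e - ω • f) ⬝ᵥ (L *ᵥ (e + ω • f)) =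
      star e ⬝ᵥ (L *ᵥ e) + ω * (star e ⬝ᵥ (L *ᵥ f)) -
      starRingEnd ℂ ω * (star f ⬝ᵥ (L *ᵥ e)) -
      starRingEnd ℂ ω * ω * (star f ⬝ᵥ (L *ᵥ f)) := by
  simp only [star_sub, star_smul, sub_dotProduct, smul_dotProduct,
    Matrix.mulVec_add, Matrix.mulVec_smul, dotProduct_add, dotProduct_smul,
    smul_eq_mul, Complex.star_def]
  ring

private lemma eq_scalar (L P : Matrix (Fin 2) (Fin 2) ℂ) (nn p : ℂ) (hn : nn ≠ 0)
    (hPP : Pᴴ * P = nn • 1) (hPLP : Pᴴ * (L * P) = p • 1) :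
    ∃ a : ℂ, L = a • 1 := by
  have hl : ((1 / nn) • Pᴴ) * P = 1 := by
    rw [Matrix.smul_mul, hPP, smul_smul]
    rw [div_mul_cancel₀ _ hn]; simp
  have hr := mul_eq_one_comm.mp hl
  have hPPt : P * Pᴴ = nn • 1 := by
    have h := congrArg (fun M => nn • M) hr
    simp only [Matrix.mul_smul, smul_smul] at h
    rw [mul_div_cancel₀ _ hn] at h
    simpa using h
  refine ⟨p / nn, ?_⟩
  have h1 : P * (Pᴴ * (L * P)) * Pᴴ = P * (p • 1) * Pᴴ := by rw [hPLP]
  have h2 : P * (Pᴴ * (L * P)) * Pᴴ = (nn * nn) • L := by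
    have : P * (Pᴴ * (L * P)) * Pᴴ = (P * Pᴴ) * L * (P * Pᴴ) := by
      simp only [mul_assoc]
    rw [this, hPPt]
    simp [Matrix.smul_mul, Matrix.mul_smul, smul_smul]
  have h3 : P * (p • 1) * Pᴴ = (p * nn) • 1 := by
    rw [Matrix.mul_smul, Matrix.smul_mul, mul_one, hPPt, smul_smul]
  rw [h2, h3] at h1
  have h4 := congrArg (fun M => (nn * nn)⁻¹ • M) h1
  simp only [smul_smul] at h4
  rw [inv_mul_cancel₀ (by simp [hn]), one_smul] at h4
  rw [h4]
  congr 1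
  field_simp

private lemma Ls_scalar (L T : Matrix (Fin 2) (Fin 2) ℂ) (e f : Fin 2 → ℂ) (lam : ℂ)
    (hTe : T *ᵥ e = lam • e) (hTf : T *ᵥ f = (-lam) • f)
    (hef : star e ⬝ᵥ f = 0) (hfe : star f ⬝ᵥ e = 0)
    (hnorm : star e ⬝ᵥ e = star f ⬝ᵥ f) (hne : star e ⬝ᵥ e ≠ 0)
    (hz : ∀ χ ψ : Fin 2 → ℂ, star ψ ⬝ᵥ χ = 0 → star ψ ⬝ᵥ (T *ᵥ ψ) = 0 →
      star ψ ⬝ᵥ (L *ᵥ χ) = 0) : ∃ a : ℂ, L = a • 1 := by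
  have pair : ∀ ω : ℂ, starRingEnd ℂ ω * ω = 1 →
      star (e - ω • f) ⬝ᵥ (L *ᵥ (e + ω • f)) = 0 := by
    intro ω hω
    have horth := pair_orth e f ω hω hef hfe hnorm
    apply hz _ _ horth
    have hT : T *ᵥ (e - ω • f) = lam • (e + ω • f) := by
      rw [Matrix.mulVec_sub, Matrix.mulVec_smul, hTe, hTf]
      funext i
      simp only [Pi.smul_apply, Pi.sub_apply, Pi.add_apply, smul_eq_mul]
      ring
    rw [hT, dotProduct_smul, horth, smul_eq_mul, mul_zero]
  have z1 := (pair_expand L e f 1).symm.trans (pair 1 (by simp))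
  have z2 := (pair_expand L e f (-1)).symm.trans (pair (-1) (by simp))
  have z3 := (pair_expand L e f Complex.I).symm.trans (pair Complex.I (by simp))
  simp only [_root_.map_one, map_neg, Complex.conj_I, one_mul, neg_mul, neg_neg, mul_one,
    mul_neg, Complex.I_mul_I, sub_neg_eq_add] at z1 z2 z3
  have hBC : star e ⬝ᵥ (L *ᵥ f) = star f ⬝ᵥ (L *ᵥ e) := by linear_combination (z1 - z2) / 2
  have h11 : star e ⬝ᵥ (L *ᵥ e) = star f ⬝ᵥ (L *ᵥ f) := by linear_combination (z1 + z2) / 2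
  have h2IB : Complex.I * (2 * (star e ⬝ᵥ (L *ᵥ f))) = 0 := by
    linear_combination z3 - (z1 + z2) / 2 + Complex.I * hBC
  have h12 : star e ⬝ᵥ (L *ᵥ f) = 0 := by
    rcases mul_eq_zero.mp h2IB with h | h
    · exact absurd h Complex.I_ne_zero
    · linear_combination h / 2
  have h21 : star f ⬝ᵥ (L *ᵥ e) = 0 := by rw [← hBC]; exact h12
  set Pm : Matrix (Fin 2) (Fin 2) ℂ := Matrix.of ![![e 0, f 0], ![e 1, f 1]] with hPm
  have hefe := hef; have hfee := hfe; have hnorme := hnorm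
  have h11e := h11; have h12e := h12; have h21e := h21
  simp only [dotProduct, Matrix.mulVec, Fin.sum_univ_two, Pi.star_apply,
    RCLike.star_def] at hefe hfee hnorme h11e h12e h21e
  apply eq_scalar L Pm (star e ⬝ᵥ e) (star e ⬝ᵥ (L *ᵥ e)) hne
  · ext i j
    fin_cases i <;> fin_cases j <;>
      simp [hPm, Matrix.mul_apply, Matrix.conjTranspose_apply, Fin.sum_univ_two,
        Matrix.one_apply, dotProduct, Pi.star_apply, RCLike.star_def] <;>
      first
        | linear_combination hefe
        | linear_combination hfee
        | linear_combination hnorme.symm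
  · ext i j
    fin_cases i <;> fin_cases j <;>
      simp [hPm, Matrix.mul_apply, Matrix.conjTranspose_apply, Fin.sum_univ_two,
        Matrix.one_apply, dotProduct, Matrix.mulVec, Pi.star_apply,
        RCLike.star_def] <;>
      first
        | linear_combination h12e
        | linear_combination h21e
        | linear_combination h11e.symm

private lemma main0 (𝓛 : Matrix (Fin 2) (Fin 2) ℂ →ₗ[ℂ] Matrix (Fin 2) (Fin 2) ℂ)
    (hL : IsLindblad (fun ρ => 𝓛 ρ))
    (hrk : Module.finrank ℂ (LinearMap.range 𝓛) ≤ 1) : 𝓛 = 0 := by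
  obtain ⟨H, hH, m, Ls, hform0⟩ := hL
  have hform : ∀ ρ, 𝓛 ρ = Complex.I • (ρ * H - H * ρ) + ∑ k, dissipator (Ls k) ρ := hform0
  by_contra h0
  have hex : ∃ ρ, 𝓛 ρ ≠ 0 := by
    by_contra hcn; push_neg at hcn
    exact h0 (LinearMap.ext fun ρ => hcn ρ)
  obtain ⟨ρ₀, hρ₀⟩ := hex
  have hherm : ∀ ρ : Matrix (Fin 2) (Fin 2) ℂ, 𝓛 ρᴴ = (𝓛 ρ)ᴴ := by
    intro ρ
    rw [hform, hform, Matrix.conjTranspose_add, Matrix.conjTranspose_smul,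
      Matrix.conjTranspose_sub, Matrix.conjTranspose_mul, Matrix.conjTranspose_mul, hH.eq,
      Matrix.conjTranspose_sum]
    congr 1
    · simp only [Complex.star_def, Complex.conj_I, neg_smul, smul_sub, neg_sub]
      abel
    · exact Finset.sum_congr rfl fun k _ => diss_herm (Ls k) ρ
  have htr : ∀ ρ, (𝓛 ρ).trace = 0 := by
    intro ρ
    rw [hform, Matrix.trace_add, Matrix.trace_smul, Matrix.trace_sub,
      Matrix.trace_mul_comm ρ H, sub_self, smul_zero, zero_add, Matrix.trace_sum]
    exact Finset.sum_eq_zero fun k _ => trace_diss (Ls k) ρ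
  have hexh : ∃ σ : Matrix (Fin 2) (Fin 2) ℂ, σᴴ = σ ∧ 𝓛 σ ≠ 0 := by
    by_cases h1 : 𝓛 (ρ₀ + ρ₀ᴴ) = 0
    · refine ⟨Complex.I • (ρ₀ - ρ₀ᴴ), ?_, ?_⟩
      · rw [Matrix.conjTranspose_smul, Matrix.conjTranspose_sub,
          Matrix.conjTranspose_conjTranspose]
        simp only [Complex.star_def, Complex.conj_I, neg_smul, smul_sub, neg_sub]
        abel
      · intro h2
        apply hρ₀
        have hI2 : (Complex.I / 2) * Complex.I = -(1/2 : ℂ) := by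
          rw [div_mul_eq_mul_div, Complex.I_mul_I]; norm_num
        have hid : ρ₀ = (1/2 : ℂ) • (ρ₀ + ρ₀ᴴ) - (Complex.I/2) • (Complex.I • (ρ₀ - ρ₀ᴴ)) := by
          rw [smul_smul, hI2]
          module
        rw [hid, map_sub, _root_.map_smul, _root_.map_smul, h1, h2, smul_zero, smul_zero, sub_zero]
    · exact ⟨ρ₀ + ρ₀ᴴ,
        by rw [Matrix.conjTranspose_add, Matrix.conjTranspose_conjTranspose, add_comm], h1⟩
  obtain ⟨σ, hσh, hσ0⟩ := hexh
  set T : Matrix (Fin 2) (Fin 2) ℂ := 𝓛 σ with hTdef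
  have hTh : Tᴴ = T := by rw [hTdef, ← hherm σ, hσh]
  have hTtr : T.trace = 0 := htr σ
  have hspan : ∀ ρ, ∃ c : ℂ, 𝓛 ρ = c • T := by
    have hle : Submodule.span ℂ {T} ≤ LinearMap.range 𝓛 :=
      (Submodule.span_singleton_le_iff_mem _ _).mpr ⟨σ, rfl⟩
    have heq : Submodule.span ℂ {T} = LinearMap.range 𝓛 :=
      Submodule.eq_of_le_of_finrank_le hle
        (by rw [finrank_span_singleton hσ0]; exact hrk)
    intro ρ
    obtain ⟨c, hc⟩ := Submodule.mem_span_singleton.mp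
      (heq ▸ (LinearMap.mem_range_self 𝓛 ρ))
    exact ⟨c, hc.symm⟩
  have hz : ∀ χ ψ : Fin 2 → ℂ, star ψ ⬝ᵥ χ = 0 → star ψ ⬝ᵥ (T *ᵥ ψ) = 0 →
      ∀ k, star ψ ⬝ᵥ ((Ls k) *ᵥ χ) = 0 := by
    intro χ ψ ho hTψ k
    obtain ⟨c, hc⟩ := hspan (Matrix.vecMulVec χ (star χ))
    have hq := key_id H Ls χ ψ ho
    rw [← hform, hc, Matrix.smul_mulVec, dotProduct_smul, hTψ, smul_zero] at hq
    have hreal : ∀ j : Fin m,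
        (2 * (starRingEnd ℂ (star ψ ⬝ᵥ (Ls j *ᵥ χ)) * (star ψ ⬝ᵥ (Ls j *ᵥ χ)))) =
        ((2 * Complex.normSq (star ψ ⬝ᵥ (Ls j *ᵥ χ)) : ℝ) : ℂ) := by
      intro j
      rw [mul_comm (starRingEnd ℂ _), Complex.mul_conj]
      push_cast
      ring
    rw [Finset.sum_congr rfl (fun j _ => hreal j)] at hq
    rw [← Complex.ofReal_sum] at hq
    have hq' : ∑ j : Fin m, 2 * Complex.normSq (star ψ ⬝ᵥ (Ls j *ᵥ χ)) = 0 := by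
      exact_mod_cast hq.symm
    have hj := (Finset.sum_eq_zero_iff_of_nonneg
      (fun j _ => mul_nonneg (by norm_num) (Complex.normSq_nonneg _))).mp hq' k (Finset.mem_univ k)
    have : Complex.normSq (star ψ ⬝ᵥ (Ls k *ᵥ χ)) = 0 := by linarith
    exact Complex.normSq_eq_zero.mp this
  have hT10 : T 1 0 = starRingEnd ℂ (T 0 1) := by
    have h := congrFun (congrFun hTh 1) 0
    simpa [Matrix.conjTranspose_apply] using h.symm
  have hT11 : T 1 1 = - T 0 0 := by
    have h := hTtr
    simp [Matrix.trace, Fin.sum_univ_two, Matrix.diag] at h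
    linear_combination h
  have hT00 : starRingEnd ℂ (T 0 0) = T 0 0 := by
    have h := congrFun (congrFun hTh 0) 0
    simpa [Matrix.conjTranspose_apply] using h
  have hLs : ∀ k, ∃ a : ℂ, Ls k = a • 1 := by
    intro k
    by_cases hcz : T 0 1 = 0
    · have ht0 : T 0 0 ≠ 0 := by
        intro h
        apply hσ0
        ext i j
        fin_cases i <;> fin_cases j <;>
          simp [← hTdef, h, hcz, hT10, hT11]
      refine Ls_scalar (Ls k) T ![1,0] ![0,1] (T 0 0) ?_ ?_ ?_ ?_ ?_ ?_
        (fun χ ψ h1 h2 => hz χ ψ h1 h2 k)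
      · funext i
        fin_cases i <;>
          simp [Matrix.mulVec, dotProduct, Fin.sum_univ_two, hcz, hT10]
      · funext i
        fin_cases i <;>
          simp [Matrix.mulVec, dotProduct, Fin.sum_univ_two, hcz, hT11]
      · simp [dotProduct, Fin.sum_univ_two]
      · simp [dotProduct, Fin.sum_univ_two]
      · simp [dotProduct, Fin.sum_univ_two]
      · simp [dotProduct, Fin.sum_univ_two]
    · set c : ℂ := T 0 1 with hcdef
      set tr : ℝ := (T 0 0).re with htrdef
      have hT00' : T 0 0 = (tr : ℂ) := (Complex.conj_eq_iff_re.mp hT00).symm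
      set lam : ℝ := Real.sqrt (tr^2 + Complex.normSq c) with hlamdef
      have hlam2 : (lam:ℝ)^2 = tr^2 + Complex.normSq c := Real.sq_sqrt (by nlinarith [Complex.normSq_nonneg c, sq_nonneg tr])
      set d : ℂ := ((lam - tr : ℝ) : ℂ) with hddef
      have hdconj : starRingEnd ℂ d = d := by rw [hddef]; exact Complex.conj_ofReal _
      have hd' : d = (lam:ℂ) - (tr:ℂ) := by rw [hddef]; push_cast; ring
      have hcc : starRingEnd ℂ c * c = (Complex.normSq c : ℂ) := by
        rw [mul_comm]; exact Complex.mul_conj _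
      have hlam2' : ((lam:ℝ):ℂ)^2 = ((tr:ℝ):ℂ)^2 + (Complex.normSq c : ℂ) := by
        exact_mod_cast hlam2
      refine Ls_scalar (Ls k) T ![c, d] ![-d, starRingEnd ℂ c] ((lam:ℝ):ℂ) ?_ ?_ ?_ ?_ ?_ ?_
        (fun χ ψ h1 h2 => hz χ ψ h1 h2 k)
      · funext i
        fin_cases i <;>
          simp only [Matrix.mulVec, dotProduct, Fin.sum_univ_two, Matrix.cons_val_zero,
            Matrix.cons_val_one, Matrix.head_cons, Pi.smul_apply, smul_eq_mul, Fin.isValue,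
            Fin.zero_eta, Fin.mk_one, hT00', hT10, hT11, ← hcdef]
        · linear_combination c * hd'
        · linear_combination hcc - ((lam:ℂ) + (tr:ℂ)) * hd' - hlam2'
      · funext i
        fin_cases i <;>
          simp only [Matrix.mulVec, dotProduct, Fin.sum_univ_two, Matrix.cons_val_zero,
            Matrix.cons_val_one, Matrix.head_cons, Pi.smul_apply, smul_eq_mul, Fin.isValue,
            Fin.zero_eta, Fin.mk_one, hT00', hT10, hT11, ← hcdef]
        · linear_combination hcc - ((lam:ℂ) + (tr:ℂ)) * hd' - hlam2'
        · linear_combination (- starRingEnd ℂ c) * hd'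
      · simp only [dotProduct, Fin.sum_univ_two, Pi.star_apply, RCLike.star_def,
          Matrix.cons_val_zero, Matrix.cons_val_one, Matrix.head_cons, Fin.isValue]
        linear_combination (starRingEnd ℂ c) * hdconj
      · simp only [dotProduct, Fin.sum_univ_two, Pi.star_apply, RCLike.star_def,
          Matrix.cons_val_zero, Matrix.cons_val_one, Matrix.head_cons, Fin.isValue, map_neg,
          Complex.conj_conj]
        linear_combination (- c) * hdconj
      · simp only [dotProduct, Fin.sum_univ_two, Pi.star_apply, RCLike.star_def,
          Matrix.cons_val_zero, Matrix.cons_val_one, Matrix.head_cons, Fin.isValue, map_neg,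
          Complex.conj_conj]
        ring
      · have hval : star ![c, d] ⬝ᵥ ![c, d] =
            ((Complex.normSq c + (lam - tr)^2 : ℝ) : ℂ) := by
          simp only [dotProduct, Fin.sum_univ_two, Pi.star_apply, RCLike.star_def,
            Matrix.cons_val_zero, Matrix.cons_val_one, Matrix.head_cons, Fin.isValue]
          push_cast
          rw [hddef]
          push_cast
          simp only [map_sub, Complex.conj_ofReal]
          linear_combination hcc
        rw [hval]
        rw [Ne, Complex.ofReal_eq_zero]
        have hpos : 0 < Complex.normSq c := Complex.normSq_pos.mpr hcz
        nlinarith [sq_nonneg (lam - tr)]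
  have hcomm : ∀ ρ, 𝓛 ρ = Complex.I • (ρ * H - H * ρ) := by
    intro ρ
    rw [hform,
      Finset.sum_eq_zero (fun k _ => by
        obtain ⟨a, ha⟩ := hLs k; rw [ha]; exact diss_scalar a ρ),
      add_zero]
  obtain ⟨c1, hc1⟩ := hspan !![1,0;0,0]
  obtain ⟨c2, hc2⟩ := hspan !![0,1;0,0]
  obtain ⟨c3, hc3⟩ := hspan !![0,0;1,0]
  rw [hcomm] at hc1 hc2 hc3
  have u1 := congrFun (congrFun hc1 0) 0
  have u2 := congrFun (congrFun hc1 0) 1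
  have v1 := congrFun (congrFun hc3 0) 0
  have v2 := congrFun (congrFun hc3 1) 0
  have w1 := congrFun (congrFun hc2 0) 1
  have w2 := congrFun (congrFun hc2 1) 0
  simp [Matrix.smul_apply, Matrix.sub_apply, Matrix.mul_apply, Matrix.vecMul, dotProduct, Fin.sum_univ_two] at u1 u2 v1 v2 w1 w2
  have hH01 : H 0 1 = 0 := by
    by_contra hne01
    have hc1ne : c1 ≠ 0 := by
      intro h
      rw [h, zero_mul] at u2
      rcases mul_eq_zero.mp u2 with h' | h'
      · exact Complex.I_ne_zero h'
      · exact hne01 h'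
    have hT00z : T 0 0 = 0 := u1.resolve_left hc1ne
    rw [hT00z, mul_zero] at v1
    have hv := neg_eq_zero.mp v1
    rcases mul_eq_zero.mp hv with h' | h'
    · exact Complex.I_ne_zero h'
    · exact hne01 h'
  have hH11 : H 1 1 = H 0 0 := by
    by_contra hne11
    have hc2ne : c2 ≠ 0 := by
      intro h
      rw [h, zero_mul] at w1
      rcases mul_eq_zero.mp w1 with h' | h'
      · exact Complex.I_ne_zero h'
      · exact hne11 (by linear_combination h')
    have hT10z : T 1 0 = 0 := w2.resolve_left hc2ne
    rw [hT10z, mul_zero] at v2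
    rcases mul_eq_zero.mp v2 with h' | h'
    · exact Complex.I_ne_zero h'
    · exact hne11 (by linear_combination -h')
  have hH10 : H 1 0 = 0 := by
    have h := congrFun (congrFun hH.eq 1) 0
    rw [← h]
    simp [Matrix.conjTranspose_apply, hH01]
  have hHs : H = (H 0 0) • 1 := by
    ext i j
    fin_cases i <;> fin_cases j <;>
      simp [hH01, hH10, hH11, Matrix.one_apply]
  apply h0
  apply LinearMap.ext
  intro ρ
  rw [hcomm, hHs]
  simp [Matrix.mul_smul, Matrix.smul_mul]

end Stmt11Helpers

/-- the kernel of a single-qubit Lindblad generator never has complex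
dimension exactly 3; equivalently, a single-qubit Lindblad generator annihilating three
linearly independent matrices is identically zero. -/
theorem stmt11 (𝓛 : Matrix (Fin 2) (Fin 2) ℂ →ₗ[ℂ] Matrix (Fin 2) (Fin 2) ℂ)
    (hL : IsLindblad (fun ρ => 𝓛 ρ)) :
    Module.finrank ℂ (LinearMap.ker 𝓛) ≠ 3 ∧
    (∀ v : Fin 3 → Matrix (Fin 2) (Fin 2) ℂ, LinearIndependent ℂ v →
      (∀ i, 𝓛 (v i) = 0) → 𝓛 = 0) := by
  classical
  have h4 : Module.finrank ℂ (Matrix (Fin 2) (Fin 2) ℂ) = 4 := by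
    rw [Module.finrank_matrix]
    simp
  have hrn := LinearMap.finrank_range_add_finrank_ker 𝓛
  rw [h4] at hrn
  constructor
  · intro h3
    rw [h3] at hrn
    have h1 : Module.finrank ℂ (LinearMap.range 𝓛) ≤ 1 := by omega
    have hz := main0 𝓛 hL h1
    rw [hz] at h3
    rw [LinearMap.ker_zero, finrank_top, h4] at h3
    omega
  · intro v hv hv0
    have hsp : Submodule.span ℂ (Set.range v) ≤ LinearMap.ker 𝓛 := by
      rw [Submodule.span_le]
      rintro x ⟨i, rfl⟩
      exact hv0 i
    have h3 : 3 ≤ Module.finrank ℂ (LinearMap.ker 𝓛) := by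
      have hm := Submodule.finrank_mono hsp
      rw [finrank_span_eq_card hv] at hm
      simpa using hm
    exact main0 𝓛 hL (by omega)
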